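/- Let G be a finite group and let L_1, …, L_s be pairwise distinct components of G, and write L_1⋯L_s for the subgroup they generate. Then the Fitting subgroup of C_G(L_1⋯L_s) equals the Fitting subgroup of G. In particular, for every prime p, if O_p(G) = 1 then O_p(C_G(L_1⋯L_s)) = 1. -/

import Mathlib

attribute [local instance] Classical.propDecidable

noncomputable section

namespace QF

/-! ## Group-theoretic notions -/

/-- `H` is a normal subgroup of `K` (as subgroups of an ambient group `G`). -/
def NormalIn {G : Type*} [Group G] (H K : Subgroup G) : Prop :=
  H ≤ K ∧ ∀ k ∈ K, ∀ h ∈ H, k * h * k⁻¹ ∈ H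

/-- `L` is a subnormal subgroup of `G`: there is a finite chain of subgroups from `L` to `G`,
each normal in the next. -/
def IsSubnormal {G : Type*} [Group G] (L : Subgroup G) : Prop :=
  ∃ (n : ℕ) (c : ℕ → Subgroup G), c 0 = L ∧ c n = ⊤ ∧ ∀ i < n, NormalIn (c i) (c (i + 1))

/-- `L` is quasisimple: `L = [L,L]` and `L/Z(L)` is a nonabelian simple group. -/
def IsQuasisimple {G : Type*} [Group G] (L : Subgroup G) : Prop :=
  ⁅L, L⁆ = L ∧ IsSimpleGroup (↥L ⧸ Subgroup.center ↥L) ∧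
    ∃ a b : ↥L ⧸ Subgroup.center ↥L, a * b ≠ b * a

/-- A component of a group: a subnormal quasisimple subgroup. -/
def IsComponent {G : Type*} [Group G] (L : Subgroup G) : Prop :=
  IsSubnormal L ∧ IsQuasisimple L

/-- The Fitting subgroup: the subgroup generated by all nilpotent normal subgroups. -/
def fittingSubgroup (G : Type*) [Group G] : Subgroup G :=
  sSup {N : Subgroup G | N.Normal ∧ Group.IsNilpotent ↥N}

/-- `E(G)`: the subgroup generated by all components of `G`. -/
def layer (G : Type*) [Group G] : Subgroup G :=
  sSup {L : Subgroup G | IsComponent L}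

/-- The generalized Fitting subgroup `F*(G) = F(G) ⬝ E(G)`. -/
def genFitting (G : Type*) [Group G] : Subgroup G :=
  fittingSubgroup G ⊔ layer G

/-- `O_p(G) = 1`: every normal `p`-subgroup of `G` is trivial. -/
def OpTrivial (p : ℕ) (G : Type*) [Group G] : Prop :=
  ∀ N : Subgroup G, N.Normal → IsPGroup p ↥N → N = ⊥

/-- `E` is an elementary abelian `p`-subgroup (possibly trivial). -/
def IsElemAb (p : ℕ) {G : Type*} [Group G] (E : Subgroup G) : Prop :=
  (∀ x ∈ E, ∀ y ∈ E, x * y = y * x) ∧ ∀ x ∈ E, x ^ p = 1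

/-- The Quillen poset `A_p(H)` of nontrivial elementary abelian `p`-subgroups of `G`
contained in the subgroup `H`, regarded as a set of subgroups of `G`. -/
def apIn (p : ℕ) {G : Type*} [Group G] (H : Subgroup G) : Set (Subgroup G) :=
  {E | E ≠ ⊥ ∧ IsElemAb p E ∧ E ≤ H}

/-- The `p`-outer poset of `L` in `G`: nontrivial elementary abelian `p`-subgroups `B`
of `N_G(L)` with `B ∩ (L C_G(L)) = 1`. -/
def outPoset (p : ℕ) {G : Type*} [Group G] (L : Subgroup G) : Set (Subgroup G) :=
  {B | B ≠ ⊥ ∧ IsElemAb p B ∧ B ≤ Subgroup.normalizer (L : Set G) ∧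
    B ⊓ (L ⊔ Subgroup.centralizer (L : Set G)) = ⊥}

/-- The `p`-rank of a group: the largest `n` such that `K` contains an elementary abelian
`p`-subgroup of order `p ^ n`. -/
def pRank (p : ℕ) (K : Type*) [Group K] : ℕ :=
  sSup {n : ℕ | ∃ E : Subgroup K, IsElemAb p E ∧ Nat.card ↥E = p ^ n}

/-- The `p`-local `q`-rank of a group `K`: the maximum of the `q`-ranks of normalizers of
nontrivial `p`-subgroups. -/
def pLocalRank (p q : ℕ) (K : Type*) [Group K] : ℕ :=
  sSup {n : ℕ | ∃ P : Subgroup K, P ≠ ⊥ ∧ IsPGroup p ↥P ∧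
    ∃ E : Subgroup K, E ≤ Subgroup.normalizer (P : Set K) ∧ IsElemAb q E ∧ Nat.card ↥E = q ^ n}

/-- A group is `q`-elementary if it is the (internal) direct product of a cyclic group and
a `q`-group. -/
def qElementary (q : ℕ) (G : Type*) [Group G] : Prop :=
  ∃ C R : Subgroup G, IsCyclic ↥C ∧ IsPGroup q ↥R ∧
    (∀ c ∈ C, ∀ r ∈ R, c * r = r * c) ∧ C ⊓ R = ⊥ ∧ C ⊔ R = ⊤

/-! ## The augmented rational chain complex of a finite poset

We represent a rational simplicial chain of (degree `k - 1`) of a poset `α` as a function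
`Finset α → ℚ` supported on the `k`-element chains of `α`. -/

/-- The coefficient of the face `t` in the boundary of the simplex `s`: if `t ⊆ s` with
exactly one element `x` of `s` deleted, this is `(-1) ^ (number of elements of s below x)`. -/
def bdryCoeff {α : Type*} [PartialOrder α] (s t : Finset α) : ℚ :=
  if t ⊆ s ∧ t.card + 1 = s.card then
    ∑ x ∈ s \ t, (-1 : ℚ) ^ (s.filter fun y => y < x).card
  else 0

/-- The simplicial boundary operator (on functions `Finset α → ℚ`). -/
def bdryFun {α : Type*} [PartialOrder α] (f : Finset α → ℚ) : Finset α → ℚ :=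
  fun t => ∑ᶠ s : Finset α, bdryCoeff s t * f s

/-- `f` is a chain of size `k` (i.e. simplicial degree `k - 1`) of the subposet `S` of `α`:
it is supported on totally ordered `k`-element subsets of `S`. -/
def SuppOn {α : Type*} [PartialOrder α] (S : Set α) (k : ℕ) (f : Finset α → ℚ) : Prop :=
  ∀ s, f s ≠ 0 → s.card = k ∧ IsChain (· ≤ ·) (↑s : Set α) ∧ ↑s ⊆ S

/-- `f` is a cycle of size `k` (degree `k - 1`) of the augmented rational chain complex of
the subposet `S`. -/
def IsCycleOn {α : Type*} [PartialOrder α] (S : Set α) (k : ℕ) (f : Finset α → ℚ) : Prop :=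
  SuppOn S k f ∧ bdryFun f = 0

/-- `f` is a boundary of size `k` (degree `k - 1`) in the augmented rational chain complex of
the subposet `S`. -/
def IsBoundaryOn {α : Type*} [PartialOrder α] (S : Set α) (k : ℕ) (f : Finset α → ℚ) : Prop :=
  ∃ g : Finset α → ℚ, SuppOn S (k + 1) g ∧ bdryFun g = f

/-- The reduced rational homology of the subposet `S` is nonzero in degree `k - 1`. -/
def RHomNZ {α : Type*} [PartialOrder α] (S : Set α) (k : ℕ) : Prop :=
  ∃ f : Finset α → ℚ, IsCycleOn S k f ∧ ¬ IsBoundaryOn S k f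

/-- The reduced Euler characteristic of the subposet `S`:
`χ̃(S) = ∑_{n ≥ -1} (-1)^n f_n(S)` where `f_n` is the number of `(n+1)`-element chains. -/
def redEuler {α : Type*} [PartialOrder α] (S : Set α) : ℤ :=
  ∑ᶠ s : Finset α,
    if IsChain (· ≤ ·) (↑s : Set α) ∧ ↑s ⊆ S then (-1 : ℤ) ^ (s.card + 1) else 0

/-! ## Chains in a subcomplex of the order complex -/

/-- `f` is a chain of size `k` supported on the subcomplex `M` (together with the empty chain,
for the augmentation). -/
def SuppM {α : Type*} [PartialOrder α] (M : Set (Finset α)) (k : ℕ) (f : Finset α → ℚ) : Prop :=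
  ∀ s, f s ≠ 0 → s.card = k ∧ (s = ∅ ∨ s ∈ M)

/-- `f` is a cycle of size `k` of the (augmented) chain complex of the subcomplex `M`. -/
def IsCycleM {α : Type*} [PartialOrder α] (M : Set (Finset α)) (k : ℕ) (f : Finset α → ℚ) :
    Prop :=
  SuppM M k f ∧ bdryFun f = 0

/-- `f` is a boundary of size `k` in the (augmented) chain complex of the subcomplex `M`. -/
def IsBoundaryM {α : Type*} [PartialOrder α] (M : Set (Finset α)) (k : ℕ) (f : Finset α → ℚ) :
    Prop :=
  ∃ g : Finset α → ℚ, SuppM M (k + 1) g ∧ bdryFun g = f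

/-! ## Quillen-conjecture properties -/

/-- `G` satisfies (H-QC) at `p`: if `O_p(G) = 1` then `A_p(G)` has nonzero reduced rational
homology in some degree. -/
def HQC (p : ℕ) (G : Type*) [Group G] : Prop :=
  OpTrivial p G → ∃ k : ℕ, RHomNZ (apIn p (⊤ : Subgroup G)) k

/-- `K` has Quillen dimension at `p`: if `O_p(K) = 1` then `A_p(K)` has nonzero reduced
rational homology in degree `m_p(K) - 1`. -/
def QDp (p : ℕ) (K : Type*) [Group K] : Prop :=
  OpTrivial p K → RHomNZ (apIn p (⊤ : Subgroup K)) (pRank p K)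

/-- The fixed-point subposet `A_p(H)^Q` under conjugation by the subgroup `Q`. -/
def apFixed (p : ℕ) {G : Type*} [Group G] (H Q : Subgroup G) : Set (Subgroup G) :=
  {E | E ∈ apIn p H ∧ ∀ x ∈ Q, ∀ g : G, g ∈ E ↔ x * g * x⁻¹ ∈ E}

/-- The fixed-point subposet `A_p(H)^g` under conjugation by the element `g`. -/
def apFixedElt (p : ℕ) {G : Type*} [Group G] (H : Subgroup G) (g : G) : Set (Subgroup G) :=
  {E | E ∈ apIn p H ∧ ∀ h : G, h ∈ E ↔ g * h * g⁻¹ ∈ E}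

/-- Property `R(2)` for a (nonabelian simple) group `L`. -/
def PropertyR2 (L : Type*) [Group L] : Prop :=
  ∃ Q : Subgroup L, qElementary 3 ↥Q ∧ Odd (Nat.card ↥Q) ∧ ¬ OpTrivial 3 ↥Q ∧
    ¬ ((3 : ℤ) ∣ redEuler (apFixed 2 (⊤ : Subgroup L) Q)) ∧
    ∀ E : Subgroup (MulAut L), E ≠ ⊥ → IsElemAb 2 E →
      E ≤ Subgroup.centralizer
        ((Subgroup.map (MulAut.conj : L →* MulAut L) Q : Subgroup (MulAut L)) : Set (MulAut L)) →
      E ≤ (MulAut.conj : L →* MulAut L).range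

/-! ## The pre-join of posets and the initial shuffle product -/

/-- The pre-join of `X` and `Y`: the poset `(C⁻X × C⁻Y) \ {(⊥, ⊥)}`. -/
abbrev PreJoin (X Y : Type*) := {p : WithBot X × WithBot Y // p ≠ (⊥, ⊥)}

/-- The embedding of `X` into the pre-join, `x ↦ (x, ⊥)`. -/
def inX {X Y : Type*} (x : X) : PreJoin X Y :=
  ⟨((x : WithBot X), ⊥), fun h => WithBot.coe_ne_bot (congrArg Prod.fst h)⟩

/-- The embedding of `Y` into the pre-join, `y ↦ (⊥, y)`. -/
def inY {X Y : Type*} (y : Y) : PreJoin X Y :=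
  ⟨(⊥, (y : WithBot Y)), fun h => WithBot.coe_ne_bot (congrArg Prod.snd h)⟩

/-- The element `(x, y)` of the pre-join. -/
def inXY {X Y : Type*} (x : X) (y : Y) : PreJoin X Y :=
  ⟨((x : WithBot X), (y : WithBot Y)), fun h => WithBot.coe_ne_bot (congrArg Prod.fst h)⟩

/-- `c` is a shuffle chain for the pair `(a, b)`: a maximal chain of the grid poset determined
by the `X`-part of `a` and by `b` (with the bottom `(⊥, ⊥)` removed), i.e. a chain of the
pre-join of cardinality `|a_X| + |b|` whose coordinates come from `a` and `b`. -/
def gridOK {X Y W : Type*} [PartialOrder X] [PartialOrder Y] [PartialOrder W]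
    (ιP : PreJoin X Y ↪o W) (a b : Finset W) (c : Finset (PreJoin X Y)) : Prop :=
  IsChain (· ≤ ·) (↑c : Set (PreJoin X Y)) ∧
  c.card = (a.filter fun w => ∃ x : X, w = ιP (inX x)).card + b.card ∧
  ∀ q ∈ c, (q.1.1 = ⊥ ∨ ∃ x : X, q.1.1 = (x : WithBot X) ∧ ιP (inX x) ∈ a) ∧
    (q.1.2 = ⊥ ∨ ∃ y : Y, q.1.2 = (y : WithBot Y) ∧ ιP (inY y) ∈ b)

/-- The number of inversions of the shuffle chain `c` (the number of cells of the
`a_X × b` rectangle lying below the corresponding lattice path). -/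
def invCount {X Y W : Type*} [PartialOrder X] [PartialOrder Y] [PartialOrder W]
    (ιP : PreJoin X Y ↪o W) (a b : Finset W) (c : Finset (PreJoin X Y)) : ℕ :=
  Set.ncard {xy : X × Y | ιP (inX xy.1) ∈ a ∧ ιP (inY xy.2) ∈ b ∧
    ∀ q ∈ c, q.1.1 = (xy.1 : WithBot X) → (xy.2 : WithBot Y) ≤ q.1.2}

/-- The coefficient of the chain `e` of `W` in the initial shuffle product `T(a, b)`. -/
def Tcoeff {X Y Z W : Type*} [PartialOrder X] [PartialOrder Y] [PartialOrder Z] [PartialOrder W]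
    (ιP : PreJoin X Y ↪o W) (ιZ : Z ↪o W) (a b e : Finset W) : ℚ :=
  ∑ᶠ c : Finset (PreJoin X Y),
    if gridOK ιP a b c ∧
        e = c.image (fun q => ιP q) ∪ a.filter (fun w => ∃ z : Z, w = ιZ z) then
      (-1 : ℚ) ^ invCount ιP a b c
    else 0

/-- The initial shuffle product `T_*(f ⊗ g)`, as a function on `Finset W`. -/
def Tmap {X Y Z W : Type*} [PartialOrder X] [PartialOrder Y] [PartialOrder Z] [PartialOrder W]
    (ιP : PreJoin X Y ↪o W) (ιZ : Z ↪o W) (f g : Finset W → ℚ) : Finset W → ℚ :=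
  fun e => ∑ᶠ a : Finset W, ∑ᶠ b : Finset W, f a * g b * Tcoeff ιP ιZ a b e



/-! ## Helper lemmas for the proof -/

section Proof
universe u_qf

open Subgroup

variable {G : Type u_qf} [Group G]

theorem chain_le {G : Type*} [Group G] {c : ℕ → Subgroup G} :
    ∀ {n : ℕ}, (∀ i < n, c i ≤ c (i + 1)) → c 0 ≤ c n := by
  intro n
  induction n with
  | zero => intro _; exact le_rfl
  | succ n ih => intro h; exact (ih fun i hi => h i (by omega)).trans (h n (by omega))

theorem centerMap {A B : Type*} [Group A] [Group B] (e : A ≃* B) :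
    Subgroup.map e.toMonoidHom (center A) = center B := by
  ext b
  simp only [Subgroup.mem_map]
  constructor
  · rintro ⟨a, ha, rfl⟩
    rw [Subgroup.mem_center_iff]
    intro g
    have h := Subgroup.mem_center_iff.mp ha (e.symm g)
    calc g * e.toMonoidHom a = e (e.symm g * a) := by simp
    _ = e (a * e.symm g) := by rw [h]
    _ = e.toMonoidHom a * g := by simp
  · intro hb
    refine ⟨e.symm b, ?_, by simp⟩
    rw [Subgroup.mem_center_iff]
    intro g
    have h := Subgroup.mem_center_iff.mp hb (e g)
    apply e.injective
    calc e (g * e.symm b) = e g * b := by simp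
    _ = b * e g := h
    _ = e (e.symm b * g) := by simp

noncomputable def quotCenterEquiv {A B : Type*} [Group A] [Group B] (e : A ≃* B) :
    (A ⧸ center A) ≃* (B ⧸ center B) :=
  QuotientGroup.congr _ _ e (centerMap e)

theorem simple_of_mulEquiv {A B : Type*} [Group A] [Group B] (e : A ≃* B)
    (h : IsSimpleGroup A) : IsSimpleGroup B := by
  haveI := h
  haveI : Nontrivial B := e.symm.toEquiv.nontrivial
  exact IsSimpleGroup.isSimpleGroup_of_surjective e.toMonoidHom e.surjective

theorem isQuasisimple_of_equiv {G₂ : Type*} [Group G₂] {L : Subgroup G} {L₂ : Subgroup G₂}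
    (e : ↥L ≃* ↥L₂) (h : IsQuasisimple L) (hcomm : ⁅L₂, L₂⁆ = L₂) : IsQuasisimple L₂ := by
  obtain ⟨-, hs, a, b, hab⟩ := h
  refine ⟨hcomm, simple_of_mulEquiv (quotCenterEquiv e) hs,
    quotCenterEquiv e a, quotCenterEquiv e b, ?_⟩
  intro hcontra
  exact hab ((quotCenterEquiv e).injective (by rw [map_mul, map_mul]; exact hcontra))

theorem quasisimple_subgroupOf {L H : Subgroup G} (hLH : L ≤ H) (h : IsQuasisimple L) :
    IsQuasisimple (L.subgroupOf H) := by
  apply isQuasisimple_of_equiv (Subgroup.subgroupOfEquivOfLe hLH).symm h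
  apply Subgroup.map_injective H.subtype_injective
  rw [Subgroup.map_commutator, Subgroup.subgroupOf_map_subtype, inf_eq_left.mpr hLH]
  exact h.1

theorem quasisimple_map_equiv {G₂ : Type*} [Group G₂] (e : G ≃* G₂) {L : Subgroup G}
    (h : IsQuasisimple L) : IsQuasisimple (L.map e.toMonoidHom) := by
  apply isQuasisimple_of_equiv (e.subgroupMap L) h
  rw [← Subgroup.map_commutator, h.1]

theorem normalIn_subgroupOf {A B : Subgroup G} (K : Subgroup G) (h : NormalIn A B) :
    NormalIn (A.subgroupOf K) (B.subgroupOf K) := by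
  constructor
  · intro x hx
    rw [Subgroup.mem_subgroupOf] at hx ⊢
    exact h.1 hx
  · intro k hk x hx
    rw [Subgroup.mem_subgroupOf] at hk hx ⊢
    simpa using h.2 k hk x hx

theorem normalIn_inf {A B : Subgroup G} (K : Subgroup G) (h : NormalIn A B) :
    NormalIn (A ⊓ K) (B ⊓ K) := by
  constructor
  · exact inf_le_inf_right K h.1
  · intro k hk x hx
    rw [Subgroup.mem_inf] at hk hx ⊢
    exact ⟨h.2 k hk.1 x hx.1, mul_mem (mul_mem hk.2 hx.2) (inv_mem hk.2)⟩

theorem isSubnormal_subgroupOf {L C : Subgroup G} (h : IsSubnormal L) (hLC : L ≤ C) :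
    IsSubnormal (L.subgroupOf C) := by
  obtain ⟨n, c, h0, hn, hsteps⟩ := h
  refine ⟨n, fun i => ((c i) ⊓ C).subgroupOf C, ?_, ?_, ?_⟩
  · show ((c 0) ⊓ C).subgroupOf C = _
    rw [h0, inf_eq_left.mpr hLC]
  · show ((c n) ⊓ C).subgroupOf C = _
    rw [hn, top_inf_eq, Subgroup.subgroupOf_self]
  · intro i hi
    exact normalIn_subgroupOf C (normalIn_inf C (hsteps i hi))

theorem isSubnormal_map_equiv {G₂ : Type*} [Group G₂] (e : G ≃* G₂) {L : Subgroup G}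
    (h : IsSubnormal L) : IsSubnormal (L.map e.toMonoidHom) := by
  obtain ⟨n, c, h0, hn, hsteps⟩ := h
  refine ⟨n, fun i => (c i).map e.toMonoidHom,
    by show (c 0).map e.toMonoidHom = _; rw [h0],
    by show (c n).map e.toMonoidHom = _
       rw [hn]; exact Subgroup.map_top_of_surjective _ e.surjective, ?_⟩
  intro i hi
  constructor
  · exact Subgroup.map_mono (hsteps i hi).1
  · intro k hk x hx
    obtain ⟨k', hk', rfl⟩ := Subgroup.mem_map.mp hk
    obtain ⟨x', hx', rfl⟩ := Subgroup.mem_map.mp hx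
    refine ⟨k' * x' * k'⁻¹, (hsteps i hi).2 k' hk' x' hx', by simp⟩

theorem isComponent_subgroupOf {M₀ C : Subgroup G} (h : IsComponent M₀) (hle : M₀ ≤ C) :
    IsComponent (M₀.subgroupOf C) :=
  ⟨isSubnormal_subgroupOf h.1 hle, quasisimple_subgroupOf hle h.2⟩

theorem isComponent_map_equiv {G₂ : Type*} [Group G₂] (e : G ≃* G₂) {L : Subgroup G}
    (h : IsComponent L) : IsComponent (L.map e.toMonoidHom) :=
  ⟨isSubnormal_map_equiv e h.1, quasisimple_map_equiv e h.2⟩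

theorem not_isNilpotent_of_simple_noncomm {Q : Type*} [Group Q] (hs : IsSimpleGroup Q)
    (hab : ∃ a b : Q, a * b ≠ b * a) : ¬ Group.IsNilpotent Q := by
  intro hnil
  haveI := hs
  haveI := hnil
  obtain ⟨a, b, hab⟩ := hab
  rcases (inferInstance : (Subgroup.center Q).Normal).eq_bot_or_eq_top with hz | hz
  · have hucs : ∀ n, Subgroup.upperCentralSeries Q n = ⊥ := by
      intro n
      induction n with
      | zero => exact Subgroup.upperCentralSeries_zero Q
      | succ n ih =>
        rw [eq_bot_iff]
        intro x hx
        rw [Subgroup.mem_upperCentralSeries_succ_iff] at hx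
        have hxc : x ∈ Subgroup.center Q := by
          rw [Subgroup.mem_center_iff]
          intro g
          have h1 := hx g
          rw [ih, Subgroup.mem_bot] at h1
          exact (mul_inv_eq_iff_eq_mul.mp (mul_inv_eq_one.mp h1)).symm
        rw [hz] at hxc
        exact hxc
    obtain ⟨n, hn⟩ := Group.IsNilpotent.nilpotent Q
    rw [hucs n] at hn
    have ha : a ∈ (⊥ : Subgroup Q) := by rw [hn]; trivial
    have hb : b ∈ (⊥ : Subgroup Q) := by rw [hn]; trivial
    rw [Subgroup.mem_bot] at ha hb
    exact hab (by rw [ha, hb])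
  · have ha : a ∈ Subgroup.center Q := by rw [hz]; trivial
    exact hab (Subgroup.mem_center_iff.mp ha b).symm

open scoped commutatorElement in
theorem dich : ∀ (n : ℕ) {G : Type u_qf} [Group G] (L N : Subgroup G),
    (∃ c : ℕ → Subgroup G, c 0 = L ∧ c n = ⊤ ∧ ∀ i < n, NormalIn (c i) (c (i + 1))) →
    IsQuasisimple L → N.Normal →
    L ≤ N ∨ ∀ x ∈ N, ∀ y ∈ L, x * y = y * x := by
  intro n
  induction n with
  | zero =>
    intro G _ L N hch hq hN
    obtain ⟨c, h0, hn, -⟩ := hch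
    have hL : L = ⊤ := by rw [← h0, hn]
    subst hL
    set Z := Subgroup.center G with hZ
    have hsimp : IsSimpleGroup (G ⧸ Z) :=
      simple_of_mulEquiv (quotCenterEquiv Subgroup.topEquiv) hq.2.1
    have hNmap : (N.map (QuotientGroup.mk' Z)).Normal :=
      hN.map _ (QuotientGroup.mk'_surjective Z)
    haveI := hsimp
    rcases hNmap.eq_bot_or_eq_top with hb | ht
    · right
      intro x hx y _
      have hxZ : x ∈ Z := by
        have hm : (QuotientGroup.mk' Z) x ∈ N.map (QuotientGroup.mk' Z) :=
          Subgroup.mem_map_of_mem _ hx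
        rw [hb, Subgroup.mem_bot] at hm
        have := QuotientGroup.ker_mk' (G := G) Z
        rw [← this, MonoidHom.mem_ker]
        exact hm
      exact (Subgroup.mem_center_iff.mp hxZ y).symm
    · left
      rw [← hq.1, Subgroup.commutator_le]
      intro g hg h hh
      have hm : (QuotientGroup.mk' Z) g ∈ N.map (QuotientGroup.mk' Z) := by rw [ht]; trivial
      obtain ⟨x, hxN, hx⟩ := hm
      have hz : x⁻¹ * g ∈ Z := by
        have hker := QuotientGroup.ker_mk' (G := G) Z
        rw [← hker, MonoidHom.mem_ker, map_mul, map_inv, hx]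
        simp
      have hcomm : ∀ w : G, (x⁻¹ * g) * w = w * (x⁻¹ * g) := fun w =>
        (Subgroup.mem_center_iff.mp hz w).symm
      have heq : ⁅g, h⁆ = x * (h * x⁻¹ * h⁻¹) := by
        rw [commutatorElement_def]
        calc g * h * g⁻¹ * h⁻¹ = x * ((x⁻¹ * g) * h) * (x⁻¹ * g)⁻¹ * x⁻¹ * h⁻¹ := by group
        _ = x * (h * (x⁻¹ * g)) * (x⁻¹ * g)⁻¹ * x⁻¹ * h⁻¹ := by rw [hcomm h]
        _ = x * (h * x⁻¹ * h⁻¹) := by group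
      rw [heq]
      exact mul_mem hxN (hN.conj_mem x⁻¹ (inv_mem hxN) h)
  | succ n ih =>
    intro G _ L N hch hq hN
    obtain ⟨c, h0, hn, hsteps⟩ := hch
    have hHnorm : ∀ g : G, ∀ h ∈ c n, g * h * g⁻¹ ∈ c n := by
      intro g h hh
      exact (hsteps n (by omega)).2 g (by rw [hn]; trivial) h hh
    have hLH : L ≤ c n := by
      rw [← h0]
      exact chain_le fun i hi => (hsteps i (by omega)).1
    have hch' : ∃ c' : ℕ → Subgroup ↥(c n), c' 0 = L.subgroupOf (c n) ∧ c' n = ⊤ ∧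
        ∀ i < n, NormalIn (c' i) (c' (i + 1)) := by
      refine ⟨fun i => (c i).subgroupOf (c n),
        by show (c 0).subgroupOf (c n) = _; rw [h0],
        Subgroup.subgroupOf_self _,
        fun i hi => normalIn_subgroupOf (c n) (hsteps i (by omega))⟩
    have hN' : ((N ⊓ c n).subgroupOf (c n)).Normal := by
      constructor
      intro x hx g
      rw [Subgroup.mem_subgroupOf, Subgroup.mem_inf] at hx ⊢
      constructor
      · simpa using hN.conj_mem _ hx.1 (g : G)
      · simpa using mul_mem (mul_mem g.2 hx.2) (inv_mem g.2)
    rcases ih (L.subgroupOf (c n)) ((N ⊓ c n).subgroupOf (c n)) hch'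
        (quasisimple_subgroupOf hLH hq) hN' with hle | hcent
    · left
      intro x hx
      have hm : (⟨x, hLH hx⟩ : ↥(c n)) ∈ (N ⊓ c n).subgroupOf (c n) :=
        hle (by rwa [Subgroup.mem_subgroupOf])
      rw [Subgroup.mem_subgroupOf, Subgroup.mem_inf] at hm
      exact hm.1
    · right
      have hcent' : ∀ x ∈ N ⊓ c n, ∀ y ∈ L, x * y = y * x := by
        intro x hx y hy
        have hm := hcent (⟨x, (Subgroup.mem_inf.mp hx).2⟩ : ↥(c n))
          (by rwa [Subgroup.mem_subgroupOf]) (⟨y, hLH hy⟩ : ↥(c n))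
          (by rwa [Subgroup.mem_subgroupOf])
        simpa using Subtype.ext_iff.mp hm
      have hZle : ⁅L, N⁆ ≤ N ⊓ c n := by
        rw [Subgroup.commutator_le]
        intro y hy x hx
        rw [Subgroup.mem_inf, commutatorElement_def]
        constructor
        · exact mul_mem (hN.conj_mem x hx y) (inv_mem hx)
        · have h2 : x * y⁻¹ * x⁻¹ ∈ c n := hHnorm x y⁻¹ (inv_mem (hLH hy))
          have h3 : y * (x * y⁻¹ * x⁻¹) ∈ c n := mul_mem (hLH hy) h2
          simpa [mul_assoc] using h3
      have c1 : ⁅⁅L, N⁆, L⁆ = ⊥ := by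
        rw [Subgroup.commutator_eq_bot_iff_le_centralizer]
        refine hZle.trans ?_
        intro x hx
        rw [Subgroup.mem_centralizer_iff]
        intro y hy
        exact (hcent' x hx y hy).symm
      have c2 : ⁅⁅N, L⁆, L⁆ = ⊥ := by rw [Subgroup.commutator_comm N L]; exact c1
      have c3 : ⁅⁅L, L⁆, N⁆ = ⊥ := Subgroup.commutator_commutator_eq_bot_of_rotate c1 c2
      rw [hq.1] at c3
      intro x hx y hy
      have h4 := Subgroup.commutator_le.mp c3.le y hy x hx
      rw [Subgroup.mem_bot] at h4
      exact (commutatorElement_eq_one_iff_mul_comm.mp h4).symm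

theorem comp_centralizes_nilpotent_normal {L N : Subgroup G} (hL : IsComponent L)
    (hN : N.Normal) (hnil : Group.IsNilpotent ↥N) :
    ∀ x ∈ N, ∀ y ∈ L, x * y = y * x := by
  obtain ⟨⟨n, c, hc⟩, hq⟩ := hL
  rcases dich n L N ⟨c, hc⟩ hq hN with hle | h
  · exfalso
    haveI := hnil
    have hLnil : Group.IsNilpotent ↥L :=
      nilpotent_of_mulEquiv (Subgroup.subgroupOfEquivOfLe hle)
    haveI := hLnil
    exact not_isNilpotent_of_simple_noncomm hq.2.1 hq.2.2 inferInstance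
  · exact h

theorem subq {G : Type*} [Group G] (htop : IsQuasisimple (⊤ : Subgroup G)) :
    ∀ (n : ℕ) (X : Subgroup G) (c : ℕ → Subgroup G), c 0 = X → c n = ⊤ →
    (∀ i < n, NormalIn (c i) (c (i + 1))) →
    X = ⊤ ∨ ∀ x ∈ X, ∀ g : G, x * g = g * x := by
  intro n
  induction n with
  | zero =>
    intro X c h0 hn _
    left
    rw [← h0, hn]
  | succ n ih =>
    intro X c h0 hn hsteps
    have hKnorm : (c n).Normal := by
      constructor
      intro x hx g
      exact (hsteps n (by omega)).2 g (by rw [hn]; trivial) x hx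
    rcases dich 0 ⊤ (c n) ⟨fun _ => ⊤, rfl, rfl, by omega⟩ htop hKnorm with hle | hcomm
    · have hKtop : c n = ⊤ := le_antisymm le_top hle
      exact ih X c h0 hKtop fun i hi => hsteps i (by omega)
    · right
      intro x hx g
      have hxK : x ∈ c n := by
        rw [← h0] at hx
        exact chain_le (fun i hi => (hsteps i (by omega)).1) hx
      exact hcomm x hxK g trivial

theorem dich2 : ∀ (m : ℕ) {G : Type u_qf} [Group G] (L Hs : Subgroup G),
    IsSubnormal L → IsQuasisimple L →
    (∃ d : ℕ → Subgroup G, d 0 = Hs ∧ d m = ⊤ ∧ ∀ i < m, NormalIn (d i) (d (i + 1))) →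
    L ≤ Hs ∨ ∀ x ∈ Hs, ∀ y ∈ L, x * y = y * x := by
  intro m
  induction m with
  | zero =>
    intro G _ L Hs _ _ hch
    obtain ⟨d, h0, hn, -⟩ := hch
    left
    rw [← h0, hn]
    exact le_top
  | succ m ih =>
    intro G _ L Hs hsub hq hch
    obtain ⟨d, h0, hm, hsteps⟩ := hch
    have hKnorm : (d m).Normal := by
      constructor
      intro x hx g
      exact (hsteps m (by omega)).2 g (by rw [hm]; trivial) x hx
    obtain ⟨n, c, hc⟩ := hsub
    rcases dich n L (d m) ⟨c, hc⟩ hq hKnorm with hle | hcomm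
    · -- L ≤ d m : pass to ↥(d m)
      have hHsK : Hs ≤ d m := by
        rw [← h0]
        exact chain_le fun i hi => (hsteps i (by omega)).1
      have hch' : ∃ d' : ℕ → Subgroup ↥(d m), d' 0 = Hs.subgroupOf (d m) ∧ d' m = ⊤ ∧
          ∀ i < m, NormalIn (d' i) (d' (i + 1)) := by
        refine ⟨fun i => (d i).subgroupOf (d m),
          by show (d 0).subgroupOf (d m) = _; rw [h0],
          Subgroup.subgroupOf_self _,
          fun i hi => normalIn_subgroupOf (d m) (hsteps i (by omega))⟩
      rcases ih (L.subgroupOf (d m)) (Hs.subgroupOf (d m))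
          (isSubnormal_subgroupOf ⟨n, c, hc⟩ hle) (quasisimple_subgroupOf hle hq) hch'
          with hle' | hcomm'
      · left
        intro x hx
        have hm2 : (⟨x, hle hx⟩ : ↥(d m)) ∈ Hs.subgroupOf (d m) :=
          hle' (by rwa [Subgroup.mem_subgroupOf])
        rwa [Subgroup.mem_subgroupOf] at hm2
      · right
        intro x hx y hy
        have hm2 := hcomm' (⟨x, hHsK hx⟩ : ↥(d m)) (by rwa [Subgroup.mem_subgroupOf])
          (⟨y, hle hy⟩ : ↥(d m)) (by rwa [Subgroup.mem_subgroupOf])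
        simpa using Subtype.ext_iff.mp hm2
    · right
      intro x hx y hy
      have hHsK : Hs ≤ d m := by
        rw [← h0]
        exact chain_le fun i hi => (hsteps i (by omega)).1
      exact hcomm x (hHsK hx) y hy

theorem distinct_components_commute {L M : Subgroup G} (hL : IsComponent L)
    (hM : IsComponent M) (hne : L ≠ M) : ∀ x ∈ M, ∀ y ∈ L, x * y = y * x := by
  obtain ⟨⟨m, d, hd⟩, hMq⟩ := hM
  rcases dich2 m L M hL.1 hL.2 ⟨d, hd⟩ with hle | h
  · exfalso
    -- L ≤ M, L a subnormal subgroup of quasisimple M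
    have htop : IsQuasisimple (⊤ : Subgroup ↥M) := by
      have := quasisimple_subgroupOf (le_refl M) hMq
      rwa [Subgroup.subgroupOf_self] at this
    obtain ⟨k, ck, hck0, hckn, hcksteps⟩ := isSubnormal_subgroupOf hL.1 hle
    rcases subq htop k (L.subgroupOf M) ck hck0 hckn hcksteps with heq | hcent
    · -- L = M
      apply hne
      apply le_antisymm hle
      intro x hx
      have : (⟨x, hx⟩ : ↥M) ∈ L.subgroupOf M := by rw [heq]; trivial
      rwa [Subgroup.mem_subgroupOf] at this
    · -- L.subgroupOf M is central in M, but it is quasisimple: contradiction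
      have hq' : IsQuasisimple (L.subgroupOf M) := quasisimple_subgroupOf hle hL.2
      haveI := hq'.2.1
      -- the quotient is nontrivial, but also a subsingleton
      have hallone : ∀ q : (↥(L.subgroupOf M) ⧸ Subgroup.center ↥(L.subgroupOf M)), q = 1 := by
        intro q
        obtain ⟨x, rfl⟩ := QuotientGroup.mk_surjective q
        rw [QuotientGroup.eq_one_iff, Subgroup.mem_center_iff]
        intro y
        apply Subtype.ext
        have h1 := hcent (x : ↥M) x.2 (y : ↥M)
        simpa using h1.symm
      obtain ⟨q1, q2, hq12⟩ := hq'.2.1.exists_pair_ne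
      exact hq12 (by rw [hallone q1, hallone q2])
  · exact h

lemma conj_apply' (g x : G) : (MulAut.conj g).toMonoidHom x = g * x * g⁻¹ := rfl

theorem layer_normal : (layer G).Normal := by
  constructor
  intro x hx g
  have h1 : Subgroup.map (MulAut.conj g).toMonoidHom (layer G) ≤ layer G := by
    rw [layer, (Subgroup.gc_map_comap _).l_sSup]
    exact iSup₂_le fun N hN => le_sSup (isComponent_map_equiv (MulAut.conj g) hN)
  have h2 := h1 (Subgroup.mem_map_of_mem _ hx)
  rwa [conj_apply'] at h2

theorem centralizer_normal {H : Subgroup G} (hH : H.Normal) :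
    (centralizer (H : Set G)).Normal := by
  constructor
  intro n hn g
  rw [Subgroup.mem_centralizer_iff] at hn ⊢
  intro h hh
  have hmem : g⁻¹ * h * g ∈ H := by simpa using hH.conj_mem h hh g⁻¹
  have h3 := congrArg (fun w => g * w * g⁻¹) (hn (g⁻¹ * h * g) hmem)
  simpa [mul_assoc] using h3

theorem normal_finset_sup {H : Type*} [Group H] {ι : Type*} (f : ι → Subgroup H)
    (hn : ∀ i, (f i).Normal) : ∀ s : Finset ι, (s.sup f).Normal := by
  classical
  intro s
  induction s using Finset.induction_on with
  | empty => rw [Finset.sup_empty]; infer_instance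
  | @insert a s ha ih =>
    rw [Finset.sup_insert]
    haveI := hn a
    haveI := ih
    infer_instance

theorem pjoin {H : Type*} [Group H] {ι : Type*} [Finite ι] {p : ℕ} (f : ι → Subgroup H)
    (hn : ∀ i, (f i).Normal) (hp : ∀ i, IsPGroup p ↥(f i)) : IsPGroup p ↥(⨆ i, f i) := by
  classical
  haveI := Fintype.ofFinite ι
  have hs : ∀ s : Finset ι, IsPGroup p ↥(s.sup f) := by
    intro s
    induction s using Finset.induction_on with
    | empty => rw [Finset.sup_empty]; exact IsPGroup.of_bot
    | @insert a s ha ih =>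
      rw [Finset.sup_insert]
      haveI := normal_finset_sup f hn s
      exact IsPGroup.to_sup_of_normal_right (hp a) ih
  have h2 : (⨆ i, f i) = Finset.univ.sup f := by
    rw [Finset.sup_eq_iSup]
    exact iSup_congr fun i => (iSup_pos (p := i ∈ Finset.univ) (f := fun _ => f i) (Finset.mem_univ i)).symm
  rw [h2]
  exact hs _

theorem keyR [Finite G] {M : Subgroup G} {p : ℕ}
    (hMD : M ≤ centralizer ((layer G : Subgroup G) : Set G))
    (hconj : ∀ d ∈ centralizer ((layer G : Subgroup G) : Set G), ∀ m ∈ M, d * m * d⁻¹ ∈ M)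
    (hpg : IsPGroup p ↥M) :
    ∃ R : Subgroup G, R.Normal ∧ IsPGroup p ↥R ∧ M ≤ R := by
  have hDnorm : (centralizer ((layer G : Subgroup G) : Set G)).Normal :=
    centralizer_normal layer_normal
  set D := centralizer ((layer G : Subgroup G) : Set G) with hD
  set cj : G → Subgroup G := fun g => M.map (MulAut.conj g).toMonoidHom with hcj
  have hcjle : ∀ g, cj g ≤ D := by
    intro g x hx
    obtain ⟨m, hm, rfl⟩ := Subgroup.mem_map.mp hx
    have h5 := hDnorm.conj_mem m (hMD hm) g
    rwa [conj_apply']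
  have hcjnormD : ∀ g, ∀ d ∈ D, ∀ x ∈ cj g, d * x * d⁻¹ ∈ cj g := by
    intro g d hd x hx
    obtain ⟨m, hm, rfl⟩ := Subgroup.mem_map.mp hx
    have hd' : g⁻¹ * d * g ∈ D := by simpa using hDnorm.conj_mem d hd g⁻¹
    have hm' : (g⁻¹ * d * g) * m * (g⁻¹ * d * g)⁻¹ ∈ M := hconj _ hd' m hm
    refine Subgroup.mem_map.mpr ⟨_, hm', ?_⟩
    rw [conj_apply', conj_apply']
    group
  set R := ⨆ g : G, cj g with hR
  have hcjR : ∀ g, cj g ≤ R := fun g => le_iSup cj g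
  have hMR : M ≤ R := by
    intro x hx
    refine hcjR 1 (Subgroup.mem_map.mpr ⟨x, hx, ?_⟩)
    rw [conj_apply']
    group
  have hRnorm : R.Normal := by
    constructor
    intro x hx g
    have h1 : R.map (MulAut.conj g).toMonoidHom ≤ R := by
      rw [hR, Subgroup.map_iSup]
      apply iSup_le
      intro h
      have h2 : (cj h).map (MulAut.conj g).toMonoidHom = cj (g * h) := by
        show (M.map _).map _ = M.map _
        rw [Subgroup.map_map]
        congr 1
        ext y
        simp [MonoidHom.comp_apply, conj_apply', mul_assoc]
      rw [h2]
      exact hcjR (g * h)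
    have h4 := h1 (Subgroup.mem_map_of_mem _ hx)
    rwa [conj_apply'] at h4
  have hRp : IsPGroup p ↥R := by
    have hcjD : ∀ g, ((cj g).subgroupOf D).Normal := by
      intro g
      constructor
      intro x hx d
      rw [Subgroup.mem_subgroupOf] at hx ⊢
      simpa using hcjnormD g d d.2 x hx
    have hcjp : ∀ g, IsPGroup p ↥((cj g).subgroupOf D) := by
      intro g
      have e1 : ↥M ≃* ↥(cj g) :=
        M.equivMapOfInjective (MulAut.conj g).toMonoidHom (MulAut.conj g).injective
      have e2 := Subgroup.subgroupOfEquivOfLe (hcjle g)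
      exact (hpg.of_equiv e1).of_equiv e2.symm
    have hJ := pjoin (fun g => (cj g).subgroupOf D) hcjD hcjp
    have hmap : (⨆ g : G, (cj g).subgroupOf D).map D.subtype = R := by
      rw [Subgroup.map_iSup]
      apply le_antisymm
      · apply iSup_le
        intro g
        rw [Subgroup.subgroupOf_map_subtype]
        exact inf_le_left.trans (hcjR g)
      · rw [hR]
        apply iSup_le
        intro g
        refine le_trans ?_ (le_iSup (fun g => ((cj g).subgroupOf D).map D.subtype) g)
        rw [Subgroup.subgroupOf_map_subtype]
        exact le_inf le_rfl (hcjle g)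
    have e3 := (⨆ g : G, (cj g).subgroupOf D).equivMapOfInjective D.subtype D.subtype_injective
    rw [hmap] at e3
    exact hJ.of_equiv e3
  exact ⟨R, hRnorm, hRp, hMR⟩

theorem keyD [Finite G] {s : ℕ} (L : Fin s → Subgroup G) (hcomp : ∀ i, IsComponent (L i))
    {M : Subgroup G}
    (hMC : M ≤ centralizer ((⨆ i, L i : Subgroup G) : Set G))
    (hconj : ∀ c ∈ centralizer ((⨆ i, L i : Subgroup G) : Set G), ∀ m ∈ M, c * m * c⁻¹ ∈ M)
    (hnil : Group.IsNilpotent ↥M) :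
    M ≤ centralizer ((layer G : Subgroup G) : Set G) := by
  rw [Subgroup.le_centralizer_iff, layer]
  apply sSup_le
  intro M₀ hM₀
  by_cases hcase : ∃ i, M₀ = L i
  · obtain ⟨i, rfl⟩ := hcase
    rw [← Subgroup.le_centralizer_iff]
    refine hMC.trans (Subgroup.centralizer_le ?_)
    exact SetLike.coe_subset_coe.mpr (le_iSup L i)
  · push_neg at hcase
    have hM₀C : M₀ ≤ centralizer ((⨆ i, L i : Subgroup G) : Set G) := by
      rw [Subgroup.le_centralizer_iff]
      apply iSup_le
      intro i
      intro y hy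
      rw [Subgroup.mem_centralizer_iff]
      intro x hx
      exact distinct_components_commute (hcomp i) hM₀ (fun h => hcase i h.symm) x hx y hy
    have hcompC : IsComponent (M₀.subgroupOf (centralizer ((⨆ i, L i : Subgroup G) : Set G))) :=
      isComponent_subgroupOf hM₀ hM₀C
    have hN'norm : (M.subgroupOf (centralizer ((⨆ i, L i : Subgroup G) : Set G))).Normal := by
      constructor
      intro x hx g
      rw [Subgroup.mem_subgroupOf] at hx ⊢
      simpa using hconj g g.2 x hx
    have hN'nil :
        Group.IsNilpotent ↥(M.subgroupOf (centralizer ((⨆ i, L i : Subgroup G) : Set G))) := by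
      haveI := hnil
      exact nilpotent_of_mulEquiv (Subgroup.subgroupOfEquivOfLe hMC).symm
    have hcc := comp_centralizes_nilpotent_normal hcompC hN'norm hN'nil
    intro y hy
    rw [Subgroup.mem_centralizer_iff]
    intro x hx
    have h2 := hcc (⟨x, hMC hx⟩ : ↥(centralizer ((⨆ i, L i : Subgroup G) : Set G)))
      (by rwa [Subgroup.mem_subgroupOf])
      (⟨y, hM₀C hy⟩ : ↥(centralizer ((⨆ i, L i : Subgroup G) : Set G)))
      (by rwa [Subgroup.mem_subgroupOf])
    simpa using Subtype.ext_iff.mp h2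

theorem sylow_decomp {A : Type*} [Group A] [Finite A] (hnil : Group.IsNilpotent A) :
    ∀ p : ℕ, p.Prime → ∃ Q : Subgroup A, Q.Normal ∧ Q.Characteristic ∧ IsPGroup p ↥Q ∧
      Nat.card ↥Q = p ^ (Nat.card A).factorization p := by
  intro p hp
  haveI := Fact.mk hp
  haveI := hnil
  obtain ⟨P⟩ : Nonempty (Sylow p A) := inferInstance
  have hPnorm : (P : Subgroup A).Normal := by
    have h4 := ((isNilpotent_of_finite_tfae (G := A)).out 0 3).mp ‹Group.IsNilpotent A›
    exact h4 p (Fact.mk hp) P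
  have hPchar : (P : Subgroup A).Characteristic := Sylow.characteristic_of_normal P hPnorm
  exact ⟨P, hPnorm, hPchar, P.isPGroup', Sylow.card_eq_multiplicity P⟩

theorem gen_sylow {A : Type*} [Group A] [Finite A] (f : ℕ → Subgroup A)
    (hf : ∀ p ∈ (Nat.card A).primeFactors, Nat.card ↥(f p) = p ^ (Nat.card A).factorization p) :
    (⨆ p ∈ (Nat.card A).primeFactors, f p) = ⊤ := by
  rw [← Subgroup.card_eq_iff_eq_top]
  have h1 : Nat.card ↥(⨆ p ∈ (Nat.card A).primeFactors, f p) ∣ Nat.card A :=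
    Subgroup.card_subgroup_dvd_card _
  have h2 : Nat.card A ∣ Nat.card ↥(⨆ p ∈ (Nat.card A).primeFactors, f p) := by
    have hA0 : Nat.card A ≠ 0 := Nat.card_pos.ne'
    have hJ0 : Nat.card ↥(⨆ p ∈ (Nat.card A).primeFactors, f p) ≠ 0 := Nat.card_pos.ne'
    rw [← Nat.factorization_le_iff_dvd hA0 hJ0, Finsupp.le_def]
    intro p
    by_cases hp : p ∈ (Nat.card A).primeFactors
    · have hple : f p ≤ ⨆ p ∈ (Nat.card A).primeFactors, f p := le_biSup f hp
      have hdvd : p ^ (Nat.card A).factorization p ∣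
          Nat.card ↥(⨆ p ∈ (Nat.card A).primeFactors, f p) :=
        hf p hp ▸ Subgroup.card_dvd_of_le hple
      have hpp : p.Prime := Nat.prime_of_mem_primeFactors hp
      exact (Nat.Prime.pow_dvd_iff_le_factorization hpp hJ0).mp hdvd
    · have hz : (Nat.card A).factorization p = 0 := by
        rw [← Finsupp.notMem_support_iff, Nat.support_factorization]
        exact hp
      simp [hz]
  exact Nat.dvd_antisymm h1 h2

end Proof

/-- if `L 0, …, L (s-1)` are pairwise distinct components of a finite group `G`,
then the Fitting subgroup of `C_G(L 0 ⋯ L (s-1))` equals the Fitting subgroup of `G`;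
in particular for every prime `p`, if `O_p(G) = 1` then `O_p(C_G(L 0 ⋯ L (s-1))) = 1`. -/
theorem statement2 {G : Type*} [Group G] [Finite G] {s : ℕ} (L : Fin s → Subgroup G)
    (hinj : Function.Injective L) (hcomp : ∀ i, IsComponent (L i)) :
    Subgroup.map (Subgroup.centralizer ((⨆ i, L i : Subgroup G) : Set G)).subtype
      (fittingSubgroup ↥(Subgroup.centralizer ((⨆ i, L i : Subgroup G) : Set G)))
      = fittingSubgroup G ∧
    ∀ p : ℕ, p.Prime → OpTrivial p G →
      OpTrivial p ↥(Subgroup.centralizer ((⨆ i, L i : Subgroup G) : Set G)) := by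
  set C := Subgroup.centralizer ((⨆ i, L i : Subgroup G) : Set G) with hC
  have hKle : (⨆ i, L i : Subgroup G) ≤ layer G := iSup_le fun i => le_sSup (hcomp i)
  have hDC : Subgroup.centralizer ((layer G : Subgroup G) : Set G) ≤ C :=
    Subgroup.centralizer_le (SetLike.coe_subset_coe.mpr hKle)
  have hNC : ∀ N : Subgroup G, N.Normal → Group.IsNilpotent ↥N → N ≤ C := by
    intro N hn hnil
    rw [hC, Subgroup.le_centralizer_iff]
    apply iSup_le
    intro i y hy
    rw [Subgroup.mem_centralizer_iff]
    intro x hx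
    exact comp_centralizes_nilpotent_normal (hcomp i) hn hnil x hx y hy
  have hMfacts : ∀ N' : Subgroup ↥C, N'.Normal →
      (N'.map C.subtype ≤ C ∧ ∀ c ∈ C, ∀ m ∈ N'.map C.subtype, c * m * c⁻¹ ∈ N'.map C.subtype) := by
    intro N' hN'norm
    refine ⟨Subgroup.map_subtype_le N', ?_⟩
    intro c hc m hm
    obtain ⟨n', hn', rfl⟩ := Subgroup.mem_map.mp hm
    have h5 : (⟨c, hc⟩ : ↥C) * n' * (⟨c, hc⟩ : ↥C)⁻¹ ∈ N' := hN'norm.conj_mem n' hn' ⟨c, hc⟩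
    refine Subgroup.mem_map.mpr ⟨_, h5, ?_⟩
    simp
  constructor
  · apply le_antisymm
    · -- map C.subtype (fittingSubgroup ↥C) ≤ fittingSubgroup G
      have hstep : ∀ N' : Subgroup ↥C, N'.Normal → Group.IsNilpotent ↥N' →
          N'.map C.subtype ≤ fittingSubgroup G := by
        intro N' hN'norm hN'nil
        obtain ⟨hMC, hconjC⟩ := hMfacts N' hN'norm
        set M := N'.map C.subtype with hMdef
        have hMnil : Group.IsNilpotent ↥M := by
          haveI := hN'nil
          exact nilpotent_of_mulEquiv (N'.equivMapOfInjective C.subtype C.subtype_injective)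
        have hMD := keyD L hcomp hMC hconjC hMnil
        have hdec := sylow_decomp (A := ↥M) hMnil
        choose Q hQnorm hQchar hQp hQcard using hdec
        have hpiece : ∀ (p : ℕ) (hp : p.Prime), (Q p hp).map M.subtype ≤ fittingSubgroup G := by
          intro p hp
          haveI := Fact.mk hp
          have hMQM : (Q p hp).map M.subtype ≤ M := Subgroup.map_subtype_le _
          have hMQp : IsPGroup p ↥((Q p hp).map M.subtype) :=
            (hQp p hp).of_equiv ((Q p hp).equivMapOfInjective M.subtype M.subtype_injective)
          have hMQD : (Q p hp).map M.subtype ≤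
              Subgroup.centralizer ((layer G : Subgroup G) : Set G) := hMQM.trans hMD
          have hMQconj : ∀ d ∈ Subgroup.centralizer ((layer G : Subgroup G) : Set G),
              ∀ m ∈ (Q p hp).map M.subtype, d * m * d⁻¹ ∈ (Q p hp).map M.subtype := by
            intro d hd m hm
            have hdC : d ∈ C := hDC hd
            have hfix : M.map ((MulAut.conj d : G ≃* G) : G →* G) = M := by
              apply le_antisymm
              · intro x hx
                obtain ⟨m', hm', rfl⟩ := Subgroup.mem_map.mp hx
                show ((MulAut.conj d : G ≃* G) : G →* G) m' ∈ M
                have h8 : ((MulAut.conj d : G ≃* G) : G →* G) m' = d * m' * d⁻¹ := rfl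
                rw [h8]
                exact hconjC d hdC m' hm'
              · intro m' hm'
                refine Subgroup.mem_map.mpr ⟨d⁻¹ * m' * d⁻¹⁻¹, hconjC d⁻¹ (inv_mem hdC) m' hm', ?_⟩
                show d * (d⁻¹ * m' * d⁻¹⁻¹) * d⁻¹ = m'
                group
            set e : ↥M ≃* ↥M := ((MulAut.conj d).subgroupMap M).trans (MulEquiv.subgroupCongr hfix) with he
            have hQfix : (Q p hp).map e.toMonoidHom = Q p hp :=
              Subgroup.characteristic_iff_map_eq.mp (hQchar p hp) e
            obtain ⟨q, hq, rfl⟩ := Subgroup.mem_map.mp hm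
            have hq2 : e q ∈ Q p hp := by
              rw [← hQfix]
              exact Subgroup.mem_map_of_mem _ hq
            refine Subgroup.mem_map.mpr ⟨e q, hq2, ?_⟩
            show ((e q : ↥M) : G) = d * (M.subtype q) * d⁻¹
            rw [he]
            simp [MulEquiv.trans_apply, MulAut.conj_apply]
          obtain ⟨R, hRn, hRp, hMR⟩ := keyR hMQD hMQconj hMQp
          have hRnil : Group.IsNilpotent ↥R := IsPGroup.isNilpotent hRp
          exact hMR.trans (le_sSup ⟨hRn, hRnil⟩)
        set f : ℕ → Subgroup ↥M := fun p => if hp : p.Prime then Q p hp else ⊥ with hfdef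
        have hfcard : ∀ p ∈ (Nat.card ↥M).primeFactors,
            Nat.card ↥(f p) = p ^ (Nat.card ↥M).factorization p := by
          intro p hp
          have hpp := Nat.prime_of_mem_primeFactors hp
          have h6 : f p = Q p hpp := by simp only [hfdef]; rw [dif_pos hpp]
          rw [h6]
          exact hQcard p hpp
        have hgen := gen_sylow f hfcard
        have h7 : (⊤ : Subgroup ↥M).map M.subtype = M := by
          rw [← MonoidHom.range_eq_map]
          exact Subgroup.range_subtype M
        have hMeq : M = ⨆ p ∈ (Nat.card ↥M).primeFactors, (f p).map M.subtype := by
          conv_lhs => rw [← h7, ← hgen]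
          rw [Subgroup.map_iSup]
          exact iSup_congr fun p => Subgroup.map_iSup M.subtype _
        rw [hMeq]
        apply iSup_le
        intro p
        apply iSup_le
        intro hp
        have hpp := Nat.prime_of_mem_primeFactors hp
        have h6 : f p = Q p hpp := by simp only [hfdef]; rw [dif_pos hpp]
        rw [h6]
        exact hpiece p hpp
      show Subgroup.map C.subtype
        (sSup {N : Subgroup ↥C | N.Normal ∧ Group.IsNilpotent ↥N}) ≤ fittingSubgroup G
      rw [(Subgroup.gc_map_comap C.subtype).l_sSup]
      exact iSup₂_le fun N' hN' => hstep N' hN'.1 hN'.2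
    · -- fittingSubgroup G ≤ map
      show sSup {N : Subgroup G | N.Normal ∧ Group.IsNilpotent ↥N} ≤ _
      apply sSup_le
      rintro N ⟨hn, hnil⟩
      have hNC' := hNC N hn hnil
      have h7 : (N.subgroupOf C).Normal := by
        constructor
        intro x hx g
        rw [Subgroup.mem_subgroupOf] at hx ⊢
        simpa using hn.conj_mem _ hx (g : G)
      have h8 : Group.IsNilpotent ↥(N.subgroupOf C) := by
        haveI := hnil
        exact nilpotent_of_mulEquiv (Subgroup.subgroupOfEquivOfLe hNC').symm
      have h9 : N.subgroupOf C ≤ fittingSubgroup ↥C := le_sSup ⟨h7, h8⟩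
      have h10 : N = (N.subgroupOf C).map C.subtype := by
        rw [Subgroup.subgroupOf_map_subtype, inf_eq_left.mpr hNC']
      rw [h10]
      exact Subgroup.map_mono h9
  · -- Part 2
    intro p hp hOp N hNnorm hNp
    haveI := Fact.mk hp
    obtain ⟨hMC, hconjC⟩ := hMfacts N hNnorm
    have hMp : IsPGroup p ↥(N.map C.subtype) :=
      hNp.of_equiv (N.equivMapOfInjective C.subtype C.subtype_injective)
    have hMnil : Group.IsNilpotent ↥(N.map C.subtype) := IsPGroup.isNilpotent hMp
    have hMD := keyD L hcomp hMC hconjC hMnil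
    obtain ⟨R, hRn, hRp, hMR⟩ := keyR hMD (fun d hd => hconjC d (hDC hd)) hMp
    have hRbot := hOp R hRn hRp
    have hMbot : N.map C.subtype = ⊥ := le_bot_iff.mp (hRbot ▸ hMR)
    apply Subgroup.map_injective C.subtype_injective
    rw [Subgroup.map_bot]
    exact hMbot

end QF
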